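/- Let A, B be real symmetric n×n matrices forming a non-dissipative pair, with maxrank{A,B} ≥ 3. If A and B are linearly independent, then there exists a point z ∈ ℝⁿ with zᵀAz = 0, zᵀBz = 0, and Az, Bz linearly independent. -/

import Mathlib

open Matrix
open scoped RealInnerProductSpace

set_option maxHeartbeats 1600000

section helpers

variable {n : ℕ}


lemma dotsymm (A : Matrix (Fin n) (Fin n) ℝ) (hA : A.IsSymm) (x y : Fin n → ℝ) :
    x ⬝ᵥ A.mulVec y = y ⬝ᵥ A.mulVec x := by
  rw [dotProduct_mulVec, dotProduct_comm, ← mulVec_transpose, hA.eq]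

lemma Qline2 (A : Matrix (Fin n) (Fin n) ℝ) (hA : A.IsSymm) (v u : Fin n → ℝ) (s t : ℝ) :
    (s • v + t • u) ⬝ᵥ A.mulVec (s • v + t • u)
      = s^2*(v ⬝ᵥ A.mulVec v) + 2*s*t*(u ⬝ᵥ A.mulVec v) + t^2*(u ⬝ᵥ A.mulVec u) := by
  simp only [mulVec_add, dotProduct_add, add_dotProduct, mulVec_smul, dotProduct_smul,
    smul_dotProduct, smul_eq_mul]
  rw [dotsymm A hA v u]; ring

lemma Qline (A : Matrix (Fin n) (Fin n) ℝ) (hA : A.IsSymm) (v u : Fin n → ℝ) (t : ℝ) :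
    (v + t • u) ⬝ᵥ A.mulVec (v + t • u)
      = v ⬝ᵥ A.mulVec v + 2*t*(u ⬝ᵥ A.mulVec v) + t^2*(u ⬝ᵥ A.mulVec u) := by
  have := Qline2 A hA v u 1 t; simpa using this

/-- Core 2D inequality -/
lemma core (A B : Matrix (Fin n) (Fin n) ℝ) (hA : A.IsSymm) (hB : B.IsSymm)
    (h0 : ∀ w : Fin n → ℝ, w ⬝ᵥ A.mulVec w = 0 → 0 ≤ w ⬝ᵥ B.mulVec w)
    (u v : Fin n → ℝ) (hu : 0 < u ⬝ᵥ A.mulVec u) (hv : v ⬝ᵥ A.mulVec v < 0) :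
    (v ⬝ᵥ A.mulVec v) * (u ⬝ᵥ B.mulVec u) ≤ (u ⬝ᵥ A.mulVec u) * (v ⬝ᵥ B.mulVec v) := by
  set su := u ⬝ᵥ A.mulVec u with hsu
  set sv := v ⬝ᵥ A.mulVec v with hsv
  set bA := u ⬝ᵥ A.mulVec v with hbA
  set bu := u ⬝ᵥ B.mulVec u with hbu
  set bv := v ⬝ᵥ B.mulVec v with hbv
  set bB := u ⬝ᵥ B.mulVec v with hbB
  have hd : 0 < bA^2 - su*sv := by nlinarith
  have hsq : Real.sqrt (bA^2 - su*sv) ^ 2 = bA^2 - su*sv := Real.sq_sqrt hd.le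
  have hsqpos : 0 < Real.sqrt (bA^2 - su*sv) := Real.sqrt_pos.2 hd
  set r := Real.sqrt (bA^2 - su*sv) with hr
  set T₁ := -bA + r with hT₁
  set T₂ := -bA - r with hT₂
  have hb1 : 0 ≤ su^2*bv + 2*su*T₁*bB + T₁^2*bu := by
    have h := h0 (su • v + T₁ • u) (by rw [Qline2 A hA]; linear_combination su * hsq)
    rwa [Qline2 B hB] at h
  have hb2 : 0 ≤ su^2*bv + 2*su*T₂*bB + T₂^2*bu := by
    have h := h0 (su • v + T₂ • u) (by rw [Qline2 A hA]; linear_combination su * hsq)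
    rwa [Qline2 B hB] at h
  have hvieta : T₁ * T₂ = su * sv := by rw [hT₁, hT₂]; linear_combination (-1 : ℝ) * hsq
  have hT2neg : T₂ < 0 := by nlinarith
  have hT1pos : 0 < T₁ := by nlinarith
  have key : 0 ≤ (T₁ - T₂) * su * (su*bv - sv*bu) := by
    have e : T₁ * (su^2*bv + 2*su*T₂*bB + T₂^2*bu) - T₂ * (su^2*bv + 2*su*T₁*bB + T₁^2*bu)
        = (T₁ - T₂) * su * (su*bv - sv*bu) := by linear_combination (T₂ - T₁) * bu * hvieta
    nlinarith [mul_nonneg hT1pos.le hb2, mul_nonneg (neg_nonneg.2 hT2neg.le) hb1]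
  have hpos : 0 < (T₁ - T₂) * su := by
    have : 0 < T₁ - T₂ := by linarith
    positivity
  nlinarith [key]


lemma symm_sub_smul {A B : Matrix (Fin n) (Fin n) ℝ} (hA : A.IsSymm) (hB : B.IsSymm) (μ : ℝ) :
    (B - μ • A).IsSymm := by
  simp [Matrix.IsSymm, transpose_sub, transpose_smul, hA.eq, hB.eq]

lemma Qsub_smul (A B : Matrix (Fin n) (Fin n) ℝ) (μ : ℝ) (z : Fin n → ℝ) :
    z ⬝ᵥ (B - μ • A).mulVec z = z ⬝ᵥ B.mulVec z - μ * (z ⬝ᵥ A.mulVec z) := by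
  rw [sub_mulVec, dotProduct_sub, smul_mulVec, dotProduct_smul, smul_eq_mul]

lemma isherm_of_symm {A : Matrix (Fin n) (Fin n) ℝ} (hA : A.IsSymm) : A.IsHermitian := by
  rwa [Matrix.IsHermitian, conjTranspose_eq_transpose_of_trivial]



/-- ratio inequality: from core, for QAv < 0 < QAu : QBv/QAv ≤ QBu/QAu -/
lemma ratio_le (a b c d : ℝ) (ha : a < 0) (hc : 0 < c) (h : a * d ≤ c * b) :
    b / a ≤ d / c := by
  rw [show b / a = (-b)/(-a) by rw [neg_div_neg_eq]]
  rw [div_le_div_iff₀ (by linarith) hc]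
  nlinarith

lemma exists_neg_on_null (A B : Matrix (Fin n) (Fin n) ℝ) (hA : A.IsSymm) (hB : B.IsSymm)
    (hnd : ∀ F ∈ Submodule.span ℝ ({A, B} : Set (Matrix (Fin n) (Fin n) ℝ)),
      F.PosSemidef → F = 0)
    (hli : LinearIndependent ℝ ![A, B])
    (u₀ v₀ : Fin n → ℝ) (hu₀ : 0 < u₀ ⬝ᵥ A.mulVec u₀) (hv₀ : v₀ ⬝ᵥ A.mulVec v₀ < 0) :
    ∃ z : Fin n → ℝ, z ⬝ᵥ A.mulVec z = 0 ∧ z ⬝ᵥ B.mulVec z < 0 := by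
  by_contra hcon
  push_neg at hcon
  have h0 : ∀ w : Fin n → ℝ, w ⬝ᵥ A.mulVec w = 0 → 0 ≤ w ⬝ᵥ B.mulVec w := hcon
  set S := {r : ℝ | ∃ w : Fin n → ℝ, w ⬝ᵥ A.mulVec w < 0 ∧ r = (w ⬝ᵥ B.mulVec w)/(w ⬝ᵥ A.mulVec w)}
    with hS
  have hne : S.Nonempty := ⟨_, v₀, hv₀, rfl⟩
  have hbdd : BddAbove S := by
    refine ⟨(u₀ ⬝ᵥ B.mulVec u₀)/(u₀ ⬝ᵥ A.mulVec u₀), ?_⟩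
    rintro r ⟨w, hw, rfl⟩
    exact ratio_le _ _ _ _ hw hu₀ (core A B hA hB h0 u₀ w hu₀ hw)
  set μ := sSup S with hμ
  have hQC : ∀ z : Fin n → ℝ, 0 ≤ z ⬝ᵥ B.mulVec z - μ * (z ⬝ᵥ A.mulVec z) := by
    intro z
    rcases lt_trichotomy (z ⬝ᵥ A.mulVec z) 0 with hz | hz | hz
    · have hmem : (z ⬝ᵥ B.mulVec z)/(z ⬝ᵥ A.mulVec z) ∈ S := ⟨z, hz, rfl⟩
      have hle : (z ⬝ᵥ B.mulVec z)/(z ⬝ᵥ A.mulVec z) ≤ μ := le_csSup hbdd hmem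
      have : μ * (z ⬝ᵥ A.mulVec z) ≤ ((z ⬝ᵥ B.mulVec z)/(z ⬝ᵥ A.mulVec z)) * (z ⬝ᵥ A.mulVec z) :=
        mul_le_mul_of_nonpos_right hle hz.le
      rw [div_mul_cancel₀ _ (ne_of_lt hz)] at this
      linarith
    · rw [hz, mul_zero, sub_zero]; exact h0 z hz
    · have hle : μ ≤ (z ⬝ᵥ B.mulVec z)/(z ⬝ᵥ A.mulVec z) := by
        apply csSup_le hne
        rintro r ⟨w, hw, rfl⟩
        exact ratio_le _ _ _ _ hw hz (core A B hA hB h0 z w hz hw)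
      have : μ * (z ⬝ᵥ A.mulVec z) ≤ (z ⬝ᵥ B.mulVec z) := by
        rw [← div_mul_cancel₀ (z ⬝ᵥ B.mulVec z) (ne_of_gt hz)]
        exact mul_le_mul_of_nonneg_right hle hz.le
      linarith
  have hmem : B - μ • A ∈ Submodule.span ℝ ({A, B} : Set (Matrix (Fin n) (Fin n) ℝ)) := by
    exact Submodule.sub_mem _ (Submodule.subset_span (Set.mem_insert_of_mem _ rfl))
      (Submodule.smul_mem _ _ (Submodule.subset_span (Set.mem_insert _ _)))
  have hpsd : (B - μ • A).PosSemidef := by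
    refine Matrix.PosSemidef.of_dotProduct_mulVec_nonneg (isherm_of_symm (symm_sub_smul hA hB μ)) fun x => ?_
    have := hQC x
    rw [← Qsub_smul A B μ x] at this
    simpa using this
  have h := hnd _ hmem hpsd
  have := hli.eq_zero_of_pair (s := μ) (t := (-1 : ℝ))
    (by rw [neg_one_smul]; rw [sub_eq_zero] at h; rw [← h]; abel)
  simpa using this


lemma symm_comb {A B : Matrix (Fin n) (Fin n) ℝ} (hA : A.IsSymm) (hB : B.IsSymm) (a b : ℝ) :
    (a • A + b • B).IsSymm := by
  simp [Matrix.IsSymm, transpose_add, transpose_smul, hA.eq, hB.eq]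

lemma Qcomb (A B : Matrix (Fin n) (Fin n) ℝ) (a b : ℝ) (z : Fin n → ℝ) :
    z ⬝ᵥ (a • A + b • B).mulVec z = a * (z ⬝ᵥ A.mulVec z) + b * (z ⬝ᵥ B.mulVec z) := by
  rw [add_mulVec, dotProduct_add, smul_mulVec, smul_mulVec,
    dotProduct_smul, dotProduct_smul, smul_eq_mul, smul_eq_mul]

lemma mulVec_comb (A B : Matrix (Fin n) (Fin n) ℝ) (a b : ℝ) (z : Fin n → ℝ) :
    (a • A + b • B).mulVec z = a • A.mulVec z + b • B.mulVec z := by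
  rw [add_mulVec, smul_mulVec, smul_mulVec]

lemma span_pair_comb (A B : Matrix (Fin n) (Fin n) ℝ) (a b c d : ℝ) (h : a*d - b*c ≠ 0) :
    Submodule.span ℝ ({a • A + b • B, c • A + d • B} : Set (Matrix (Fin n) (Fin n) ℝ))
      = Submodule.span ℝ ({A, B} : Set (Matrix (Fin n) (Fin n) ℝ)) := by
  apply le_antisymm
  · rw [Submodule.span_le]
    rintro X (rfl | rfl)
    · exact Submodule.mem_span_pair.2 ⟨a, b, rfl⟩
    · exact Submodule.mem_span_pair.2 ⟨c, d, rfl⟩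
  · rw [Submodule.span_le]
    rintro X (rfl | rfl)
    · refine Submodule.mem_span_pair.2 ⟨d/(a*d-b*c), -b/(a*d-b*c), ?_⟩
      have h' : d*a - b*c ≠ 0 := by intro e; apply h; linarith
      match_scalars <;> field_simp <;> ring
    · refine Submodule.mem_span_pair.2 ⟨-c/(a*d-b*c), a/(a*d-b*c), ?_⟩
      have h' : a*d - c*b ≠ 0 := by intro e; apply h; linarith
      match_scalars <;> field_simp <;> ring

lemma li_comb {A B : Matrix (Fin n) (Fin n) ℝ} (hli : LinearIndependent ℝ ![A, B])
    (a b c d : ℝ) (h : a*d - b*c ≠ 0) :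
    LinearIndependent ℝ ![a • A + b • B, c • A + d • B] := by
  rw [LinearIndependent.pair_iff]
  intro s t hst
  have h2 : (s*a + t*c) • A + (s*b + t*d) • B = 0 := by
    rw [← hst]; module
  obtain ⟨e1, e2⟩ := hli.eq_zero_of_pair h2
  constructor
  · have : s * (a*d - b*c) = 0 := by linear_combination d * e1 - c * e2
    rcases mul_eq_zero.1 this with h' | h'
    · exact h'
    · exact absurd h' h
  · have : t * (a*d - b*c) = 0 := by linear_combination -b * e1 + a * e2
    rcases mul_eq_zero.1 this with h' | h'
    · exact h'
    · exact absurd h' h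

lemma transversal_comb (A B : Matrix (Fin n) (Fin n) ℝ) (a b c d : ℝ) (hdet : a*d - b*c ≠ 0)
    (z : Fin n → ℝ)
    (h1 : z ⬝ᵥ (a • A + b • B).mulVec z = 0) (h2 : z ⬝ᵥ (c • A + d • B).mulVec z = 0)
    (h3 : LinearIndependent ℝ ![(a • A + b • B).mulVec z, (c • A + d • B).mulVec z]) :
    z ⬝ᵥ A.mulVec z = 0 ∧ z ⬝ᵥ B.mulVec z = 0 ∧
      LinearIndependent ℝ ![A.mulVec z, B.mulVec z] := by
  rw [Qcomb] at h1 h2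
  have hqA : z ⬝ᵥ A.mulVec z = 0 := by
    have : (z ⬝ᵥ A.mulVec z) * (a*d - b*c) = 0 := by linear_combination d * h1 - b * h2
    rcases mul_eq_zero.1 this with h' | h'
    · exact h'
    · exact absurd h' hdet
  have hqB : z ⬝ᵥ B.mulVec z = 0 := by
    have : (z ⬝ᵥ B.mulVec z) * (a*d - b*c) = 0 := by linear_combination -c * h1 + a * h2
    rcases mul_eq_zero.1 this with h' | h'
    · exact h'
    · exact absurd h' hdet
  refine ⟨hqA, hqB, ?_⟩
  rw [LinearIndependent.pair_iff]
  intro s t hst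
  have key : ((d*s - c*t)/(a*d-b*c)) • ((a • A + b • B).mulVec z)
      + ((a*t - b*s)/(a*d-b*c)) • ((c • A + d • B).mulVec z) = 0 := by
    rw [mulVec_comb, mulVec_comb, ← hst]
    have h' : d*a - c*b ≠ 0 := by intro e; apply hdet; linarith
    match_scalars <;> field_simp <;> ring
  obtain ⟨e1, e2⟩ := h3.eq_zero_of_pair key
  rw [div_eq_zero_iff] at e1 e2
  have e1' : d*s - c*t = 0 := by tauto
  have e2' : a*t - b*s = 0 := by tauto
  constructor
  · have : s * (a*d - b*c) = 0 := by linear_combination a * e1' + c * e2'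
    rcases mul_eq_zero.1 this with h' | h'
    · exact h'
    · exact absurd h' hdet
  · have : t * (a*d - b*c) = 0 := by linear_combination b * e1' + d * e2'
    rcases mul_eq_zero.1 this with h' | h'
    · exact h'
    · exact absurd h' hdet


lemma dot_sum_right (x : Fin n → ℝ) (f : Fin n → Fin n → ℝ) :
    x ⬝ᵥ (∑ i, f i) = ∑ i, x ⬝ᵥ f i := by
  simp only [dotProduct, Finset.sum_apply, Finset.mul_sum]
  exact Finset.sum_comm

lemma mulVec_sumv (C : Matrix (Fin n) (Fin n) ℝ) (f : Fin n → Fin n → ℝ) :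
    C.mulVec (∑ i, f i) = ∑ i, C.mulVec (f i) := by
  ext k
  simp only [mulVec, dotProduct, Finset.sum_apply, Finset.mul_sum]
  exact Finset.sum_comm

section spectral
variable {C : Matrix (Fin n) (Fin n) ℝ} (hC : C.IsHermitian)

noncomputable def evec (i : Fin n) : Fin n → ℝ := ⇑(hC.eigenvectorBasis i)

lemma evec_mul (i : Fin n) : C.mulVec (evec hC i) = hC.eigenvalues i • evec hC i :=
  hC.mulVec_eigenvectorBasis i

lemma evec_dot (i j : Fin n) : (evec hC i) ⬝ᵥ (evec hC j) = if i = j then 1 else 0 := by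
  have h := orthonormal_iff_ite.1 hC.eigenvectorBasis.orthonormal i j
  rw [EuclideanSpace.inner_eq_star_dotProduct] at h
  rw [dotProduct_comm]
  simpa [evec] using h

lemma evec_total (m : Fin n → ℝ) (h : ∀ i, (evec hC i) ⬝ᵥ m = 0) : m = 0 := by
  have hs := hC.eigenvectorBasis.sum_repr' ((WithLp.equiv 2 (Fin n → ℝ)).symm m)
  have hz : ∀ i, ⟪hC.eigenvectorBasis i, (WithLp.equiv 2 (Fin n → ℝ)).symm m⟫ = (0:ℝ) := by
    intro i
    rw [EuclideanSpace.inner_eq_star_dotProduct]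
    have := h i
    rw [dotProduct_comm] at this
    simpa [evec] using this
  rw [Finset.sum_congr rfl (fun i _ => by rw [hz i, zero_smul])] at hs
  simp only [Finset.sum_const_zero] at hs
  have := congrArg (WithLp.equiv 2 (Fin n → ℝ)) hs
  simpa using this.symm

lemma evec_expand (x : Fin n → ℝ) : x = ∑ i, ((evec hC i) ⬝ᵥ x) • evec hC i := by
  have key : ∀ j, (evec hC j) ⬝ᵥ (x - ∑ i, ((evec hC i) ⬝ᵥ x) • evec hC i) = 0 := by
    intro j
    rw [dotProduct_sub, dot_sum_right, Finset.sum_eq_single j]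
    · rw [dotProduct_smul, evec_dot]
      simp
    · intro i _ hij
      rw [dotProduct_smul, evec_dot]
      simp [Ne.symm hij]
    · intro h; simp at h
  exact (sub_eq_zero.1 (evec_total hC _ key))

lemma Qexp (x : Fin n → ℝ) :
    x ⬝ᵥ C.mulVec x = ∑ i, hC.eigenvalues i * ((evec hC i) ⬝ᵥ x)^2 := by
  have hCx : C.mulVec x = ∑ i, (hC.eigenvalues i * ((evec hC i) ⬝ᵥ x)) • evec hC i := by
    conv_lhs => rw [evec_expand hC x]
    rw [mulVec_sumv]
    refine Finset.sum_congr rfl (fun i _ => ?_)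
    rw [mulVec_smul, evec_mul, smul_smul, mul_comm]
  rw [hCx, dot_sum_right]
  refine Finset.sum_congr rfl (fun i _ => ?_)
  rw [dotProduct_smul, smul_eq_mul, dotProduct_comm]
  ring

end spectral


/-- The key construction: from a kernel-null configuration, build a transversal point. -/
lemma build (A B : Matrix (Fin n) (Fin n) ℝ) (hA : A.IsSymm) (hB : B.IsSymm)
    (z₀ : Fin n → ℝ) (hBz : B.mulVec z₀ = 0) (hQA : z₀ ⬝ᵥ A.mulVec z₀ = 0)
    (v : Fin n → ℝ) (hQBv : v ⬝ᵥ B.mulVec v = 0) (hBv : B.mulVec v ≠ 0)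
    (hvm : v ⬝ᵥ A.mulVec z₀ ≠ 0) :
    ∃ z : Fin n → ℝ, z ⬝ᵥ A.mulVec z = 0 ∧ z ⬝ᵥ B.mulVec z = 0 ∧
      LinearIndependent ℝ ![A.mulVec z, B.mulVec z] := by
  set m := A.mulVec z₀ with hm
  set r := -(v ⬝ᵥ A.mulVec v)/(2*(v ⬝ᵥ m)) with hr
  refine ⟨v + r • z₀, ?_, ?_, ?_⟩
  · rw [Qline A hA]
    rw [dotsymm A hA z₀ v, ← hm, hQA]
    rw [hr]; field_simp; ring
  · rw [Qline B hB]
    rw [dotsymm B hB z₀ v, hBz]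
    simp [hQBv]
  · have hAz : A.mulVec (v + r • z₀) = A.mulVec v + r • m := by
      rw [mulVec_add, mulVec_smul, hm]
    have hBz' : B.mulVec (v + r • z₀) = B.mulVec v := by
      rw [mulVec_add, mulVec_smul, hBz, smul_zero, add_zero]
    rw [hAz, hBz', LinearIndependent.pair_iff]
    intro s t hst
    have hdot := congrArg (fun w => z₀ ⬝ᵥ w) hst
    simp only [dotProduct_add, dotProduct_smul, smul_eq_mul, dotProduct_zero] at hdot
    have e1 : z₀ ⬝ᵥ A.mulVec v = v ⬝ᵥ m := by rw [dotsymm A hA z₀ v]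
    have e2 : z₀ ⬝ᵥ m = 0 := hQA
    have e3 : z₀ ⬝ᵥ B.mulVec v = 0 := by rw [dotsymm B hB z₀ v, hBz, dotProduct_zero]
    rw [e1, e2, e3] at hdot
    have hs : s = 0 := by
      have : s * (v ⬝ᵥ m) = 0 := by linarith [hdot]
      rcases mul_eq_zero.1 this with h' | h'
      · exact h'
      · exact absurd h' hvm
    refine ⟨hs, ?_⟩
    rw [hs, zero_smul, zero_add] at hst
    by_contra ht
    exact hBv (by
      have := congrArg (fun w => t⁻¹ • w) hst
      simpa [smul_smul, inv_mul_cancel₀ ht] using this)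


/-- every nonzero symmetric member of the span takes a positive value somewhere -/
lemma member_pos (A B C : Matrix (Fin n) (Fin n) ℝ) (hC : C.IsSymm)
    (hnd : ∀ F ∈ Submodule.span ℝ ({A, B} : Set (Matrix (Fin n) (Fin n) ℝ)),
      F.PosSemidef → F = 0)
    (hmem : C ∈ Submodule.span ℝ ({A, B} : Set (Matrix (Fin n) (Fin n) ℝ)))
    (hC0 : C ≠ 0) : ∃ x : Fin n → ℝ, 0 < x ⬝ᵥ C.mulVec x := by
  by_contra h
  push_neg at h
  have hpsd : (-C).PosSemidef := by
    refine Matrix.PosSemidef.of_dotProduct_mulVec_nonneg ?_ fun x => ?_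
    · have := isherm_of_symm hC
      exact this.neg
    · have := h x
      simp only [neg_mulVec, dotProduct_neg]
      simpa using this
  have := hnd (-C) (Submodule.neg_mem _ hmem) hpsd
  exact hC0 (by simpa [neg_eq_zero] using this)



lemma endgame (A B : Matrix (Fin n) (Fin n) ℝ) (hA : A.IsSymm) (hB : B.IsSymm)
    (hnd : ∀ F ∈ Submodule.span ℝ ({A, B} : Set (Matrix (Fin n) (Fin n) ℝ)),
      F.PosSemidef → F = 0)
    (hli : LinearIndependent ℝ ![A, B]) (z₀ : Fin n → ℝ)
    (hBz : B.mulVec z₀ = 0) (hAz : A.mulVec z₀ ≠ 0) (hQA : z₀ ⬝ᵥ A.mulVec z₀ = 0) :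
    ∃ z : Fin n → ℝ, z ⬝ᵥ A.mulVec z = 0 ∧ z ⬝ᵥ B.mulVec z = 0 ∧
      LinearIndependent ℝ ![A.mulVec z, B.mulVec z] := by
  have hB0 : B ≠ 0 := by
    intro h
    have := hli.eq_zero_of_pair (s := (0:ℝ)) (t := (1:ℝ)) (by rw [h]; simp)
    simpa using this
  have hBmem : B ∈ Submodule.span ℝ ({A, B} : Set (Matrix (Fin n) (Fin n) ℝ)) :=
    Submodule.subset_span (Set.mem_insert_of_mem _ rfl)
  have hh := isherm_of_symm hB
  obtain ⟨xp, hxp⟩ := member_pos A B B hB hnd hBmem hB0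
  have hBnegsymm : (-B).IsSymm := by simp [Matrix.IsSymm, hB.eq]
  obtain ⟨xm, hxm'⟩ := member_pos A B (-B) hBnegsymm hnd (Submodule.neg_mem _ hBmem)
    (by simpa [neg_eq_zero] using hB0)
  have hxm : xm ⬝ᵥ B.mulVec xm < 0 := by
    have := hxm'
    simp only [neg_mulVec, dotProduct_neg] at this
    linarith
  have hipos : ∃ i, 0 < hh.eigenvalues i := by
    by_contra h
    push_neg at h
    have hle : xp ⬝ᵥ B.mulVec xp ≤ 0 := by
      rw [Qexp hh xp]
      exact Finset.sum_nonpos fun i _ => mul_nonpos_of_nonpos_of_nonneg (h i) (sq_nonneg _)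
    linarith
  have hineg : ∃ j, hh.eigenvalues j < 0 := by
    by_contra h
    push_neg at h
    have hle : 0 ≤ xm ⬝ᵥ B.mulVec xm := by
      rw [Qexp hh xm]
      exact Finset.sum_nonneg fun i _ => mul_nonneg (h i) (sq_nonneg _)
    linarith
  obtain ⟨i₀, hi₀⟩ := hipos
  obtain ⟨j₀, hj₀⟩ := hineg
  set m := A.mulVec z₀ with hm
  have hex : ∃ k, (evec hh k) ⬝ᵥ m ≠ 0 := by
    by_contra h
    push_neg at h
    exact hAz (evec_total hh m h)
  obtain ⟨k, hk⟩ := hex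
  -- generic verification
  have key : ∀ (i j : Fin n), 0 < hh.eigenvalues i → hh.eigenvalues j < 0 →
      ∀ (s t : ℝ) (w : Fin n → ℝ), B.mulVec w = 0 → s^2 = 1 → t^2 = 1 →
      ((let v := ((s * (Real.sqrt (hh.eigenvalues i))⁻¹) • evec hh i
          + (t * (Real.sqrt (-hh.eigenvalues j))⁻¹) • evec hh j) + w;
       v ⬝ᵥ A.mulVec z₀ ≠ 0) →
       ∃ z : Fin n → ℝ, z ⬝ᵥ A.mulVec z = 0 ∧ z ⬝ᵥ B.mulVec z = 0 ∧
        LinearIndependent ℝ ![A.mulVec z, B.mulVec z]) := by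
    intro i j hi hj s t w hw hs2 ht2
    intro hvm
    have hij : i ≠ j := by intro h; rw [h] at hi; linarith
    have hsi : (0:ℝ) < Real.sqrt (hh.eigenvalues i) := Real.sqrt_pos.2 hi
    have hsj : (0:ℝ) < Real.sqrt (-hh.eigenvalues j) := Real.sqrt_pos.2 (by linarith)
    have hsi2 : Real.sqrt (hh.eigenvalues i)^2 = hh.eigenvalues i := Real.sq_sqrt hi.le
    have hsj2 : Real.sqrt (-hh.eigenvalues j)^2 = -hh.eigenvalues j := Real.sq_sqrt (by linarith)
    set a := s * (Real.sqrt (hh.eigenvalues i))⁻¹ with ha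
    set b := t * (Real.sqrt (-hh.eigenvalues j))⁻¹ with hb
    set p := a • evec hh i + b • evec hh j with hp
    have hs0 : s ≠ 0 := by intro h; rw [h] at hs2; norm_num at hs2
    have hBp : B.mulVec p = (a * hh.eigenvalues i) • evec hh i
        + (b * hh.eigenvalues j) • evec hh j := by
      rw [hp, mulVec_add, mulVec_smul, mulVec_smul, evec_mul, evec_mul, smul_smul, smul_smul]
    have hBv : B.mulVec (p + w) = B.mulVec p := by rw [mulVec_add, hw, add_zero]
    have hQBv : (p + w) ⬝ᵥ B.mulVec (p + w) = 0 := by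
      rw [hBv, add_dotProduct]
      have h1 : w ⬝ᵥ B.mulVec p = 0 := by
        rw [dotsymm B hB w p, hw, dotProduct_zero]
      rw [h1, add_zero]
      rw [hp, Qline2 B hB _ _ a b]
      have e1 : (evec hh i) ⬝ᵥ B.mulVec (evec hh i) = hh.eigenvalues i := by
        rw [evec_mul, dotProduct_smul, evec_dot]
        simp
      have e2 : (evec hh j) ⬝ᵥ B.mulVec (evec hh i) = 0 := by
        rw [evec_mul, dotProduct_smul, evec_dot]
        simp [Ne.symm hij]
      have e3 : (evec hh j) ⬝ᵥ B.mulVec (evec hh j) = hh.eigenvalues j := by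
        rw [evec_mul, dotProduct_smul, evec_dot]
        simp
      rw [e1, e2, e3, ha, hb]
      field_simp
      linear_combination s^2 * hh.eigenvalues i * hsj2 + t^2 * hh.eigenvalues j * hsi2
        - hh.eigenvalues i * hh.eigenvalues j * hs2 + hh.eigenvalues i * hh.eigenvalues j * ht2
    have ha0 : a ≠ 0 := by
      rw [ha]
      exact mul_ne_zero hs0 (inv_ne_zero (ne_of_gt hsi))
    have hdoti : (B.mulVec (p + w)) ⬝ᵥ evec hh i = a * hh.eigenvalues i := by
      rw [hBv, hBp, add_dotProduct, smul_dotProduct, smul_dotProduct, evec_dot, evec_dot]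
      simp [hij, Ne.symm hij, smul_eq_mul]
    have hBvne : B.mulVec (p + w) ≠ 0 := by
      intro h
      rw [h, zero_dotProduct] at hdoti
      exact absurd hdoti.symm (mul_ne_zero ha0 (ne_of_gt hi))
    exact build A B hA hB z₀ hBz hQA (p + w) hQBv hBvne hvm
  -- now the case analysis on the eigenvalue at k
  set c3 := (evec hh k) ⬝ᵥ m with hc3
  rcases lt_trichotomy (hh.eigenvalues k) 0 with hlk | hlk | hlk
  · -- λ k < 0 : use (i₀, k)
    set c1 := (Real.sqrt (hh.eigenvalues i₀))⁻¹ * ((evec hh i₀) ⬝ᵥ m) with hc1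
    set c2 := (Real.sqrt (-hh.eigenvalues k))⁻¹ * ((evec hh k) ⬝ᵥ m) with hc2
    have hc2ne : c2 ≠ 0 := by
      apply mul_ne_zero _ hk
      exact inv_ne_zero (ne_of_gt (Real.sqrt_pos.2 (by linarith)))
    have hchoice : c1 + c2 ≠ 0 ∨ c1 - c2 ≠ 0 := by
      by_contra h
      push_neg at h
      apply hc2ne
      linarith [h.1, h.2]
    have hcompute : ∀ t : ℝ, (((1 * (Real.sqrt (hh.eigenvalues i₀))⁻¹) • evec hh i₀
          + (t * (Real.sqrt (-hh.eigenvalues k))⁻¹) • evec hh k) + (0 : Fin n → ℝ)) ⬝ᵥ m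
        = c1 + t * c2 := by
      intro t
      rw [add_dotProduct, add_dotProduct, smul_dotProduct, smul_dotProduct, zero_dotProduct]
      simp only [smul_eq_mul, hc1, hc2]
      ring
    rcases hchoice with hch | hch
    · refine key i₀ k hi₀ hlk 1 1 0 (mulVec_zero _) (by norm_num) (by norm_num) ?_
      show _ ⬝ᵥ A.mulVec z₀ ≠ 0
      rw [← hm, hcompute 1]
      intro h; apply hch; linarith
    · refine key i₀ k hi₀ hlk 1 (-1) 0 (mulVec_zero _) (by norm_num) (by norm_num) ?_
      show _ ⬝ᵥ A.mulVec z₀ ≠ 0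
      rw [← hm, hcompute (-1)]
      intro h; apply hch; linarith
  · -- λ k = 0 : use (i₀, j₀) plus w = evec k
    set c1 := (Real.sqrt (hh.eigenvalues i₀))⁻¹ * ((evec hh i₀) ⬝ᵥ m) with hc1
    set c2 := (Real.sqrt (-hh.eigenvalues j₀))⁻¹ * ((evec hh j₀) ⬝ᵥ m) with hc2
    have hwk : B.mulVec (evec hh k) = 0 := by
      rw [evec_mul, hlk, zero_smul]
    have hcompute : ∀ s t : ℝ, (((s * (Real.sqrt (hh.eigenvalues i₀))⁻¹) • evec hh i₀
          + (t * (Real.sqrt (-hh.eigenvalues j₀))⁻¹) • evec hh j₀) + evec hh k) ⬝ᵥ m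
        = s * c1 + t * c2 + c3 := by
      intro s t
      rw [add_dotProduct, add_dotProduct, smul_dotProduct, smul_dotProduct]
      simp only [smul_eq_mul, hc1, hc2, hc3]
      ring
    by_cases h1 : c1 + c2 + c3 ≠ 0
    · refine key i₀ j₀ hi₀ hj₀ 1 1 (evec hh k) hwk (by norm_num) (by norm_num) ?_
      show _ ⬝ᵥ A.mulVec z₀ ≠ 0
      rw [← hm, hcompute 1 1]
      intro h; apply h1; linarith
    by_cases h2 : c1 - c2 + c3 ≠ 0
    · refine key i₀ j₀ hi₀ hj₀ 1 (-1) (evec hh k) hwk (by norm_num) (by norm_num) ?_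
      show _ ⬝ᵥ A.mulVec z₀ ≠ 0
      rw [← hm, hcompute 1 (-1)]
      intro h; apply h2; linarith
    by_cases h3 : -c1 + c2 + c3 ≠ 0
    · refine key i₀ j₀ hi₀ hj₀ (-1) 1 (evec hh k) hwk (by norm_num) (by norm_num) ?_
      show _ ⬝ᵥ A.mulVec z₀ ≠ 0
      rw [← hm, hcompute (-1) 1]
      intro h; apply h3; linarith
    · push_neg at h1 h2 h3
      exfalso
      apply hk
      have : c3 = 0 := by linarith
      exact this
  · -- λ k > 0 : use (k, j₀)
    set c1 := (Real.sqrt (hh.eigenvalues k))⁻¹ * ((evec hh k) ⬝ᵥ m) with hc1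
    set c2 := (Real.sqrt (-hh.eigenvalues j₀))⁻¹ * ((evec hh j₀) ⬝ᵥ m) with hc2
    have hc1ne : c1 ≠ 0 := by
      apply mul_ne_zero _ hk
      exact inv_ne_zero (ne_of_gt (Real.sqrt_pos.2 hlk))
    have hchoice : c1 + c2 ≠ 0 ∨ c1 - c2 ≠ 0 := by
      by_contra h
      push_neg at h
      apply hc1ne
      linarith [h.1, h.2]
    have hcompute : ∀ t : ℝ, (((1 * (Real.sqrt (hh.eigenvalues k))⁻¹) • evec hh k
          + (t * (Real.sqrt (-hh.eigenvalues j₀))⁻¹) • evec hh j₀) + (0 : Fin n → ℝ)) ⬝ᵥ m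
        = c1 + t * c2 := by
      intro t
      rw [add_dotProduct, add_dotProduct, smul_dotProduct, smul_dotProduct, zero_dotProduct]
      simp only [smul_eq_mul, hc1, hc2]
      ring
    rcases hchoice with hch | hch
    · refine key k j₀ hlk hj₀ 1 1 0 (mulVec_zero _) (by norm_num) (by norm_num) ?_
      show _ ⬝ᵥ A.mulVec z₀ ≠ 0
      rw [← hm, hcompute 1]
      intro h; apply hch; linarith
    · refine key k j₀ hlk hj₀ 1 (-1) 0 (mulVec_zero _) (by norm_num) (by norm_num) ?_
      show _ ⬝ᵥ A.mulVec z₀ ≠ 0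
      rw [← hm, hcompute (-1)]
      intro h; apply hch; linarith


lemma rank_contra (A : Matrix (Fin n) (Fin n) ℝ) (hA : A.IsSymm) (zp zm : Fin n → ℝ)
    (hqp : zp ⬝ᵥ A.mulVec zp = 0) (hqm : zm ⬝ᵥ A.mulVec zm = 0)
    (hc : zp ⬝ᵥ A.mulVec zm ≠ 0)
    (hY : ∀ y : Fin n → ℝ, y ⬝ᵥ A.mulVec zp = 0 → y ⬝ᵥ A.mulVec zm = 0 →
      y ⬝ᵥ A.mulVec y = 0) :
    A.rank ≤ 2 := by
  classical
  set c := zp ⬝ᵥ A.mulVec zm with hcc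
  -- polarization on Y
  have hbil : ∀ y y' : Fin n → ℝ, y ⬝ᵥ A.mulVec zp = 0 → y ⬝ᵥ A.mulVec zm = 0 →
      y' ⬝ᵥ A.mulVec zp = 0 → y' ⬝ᵥ A.mulVec zm = 0 → y ⬝ᵥ A.mulVec y' = 0 := by
    intro y y' h1 h2 h3 h4
    have hsum : (y + y') ⬝ᵥ A.mulVec zp = 0 := by rw [add_dotProduct, h1, h3, add_zero]
    have hsum' : (y + y') ⬝ᵥ A.mulVec zm = 0 := by rw [add_dotProduct, h2, h4, add_zero]
    have hq := hY _ hsum hsum'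
    have hy := hY _ h1 h2
    have hy' := hY _ h3 h4
    have hexp := Qline A hA y y' 1
    simp only [one_smul, one_pow, mul_one] at hexp
    rw [hq, hy, hy'] at hexp
    rw [dotsymm A hA y y']
    linarith
  -- A(V) ⊆ span {A zp} where V = {v : v ⬝ᵥ A zp = 0}
  have claim : ∀ v : Fin n → ℝ, v ⬝ᵥ A.mulVec zp = 0 →
      ∃ κ : ℝ, A.mulVec v = κ • A.mulVec zp := by
    intro v hv
    set s := (v ⬝ᵥ A.mulVec zm)/c with hs
    set y := v - s • zp with hy
    have hy1 : y ⬝ᵥ A.mulVec zp = 0 := by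
      rw [hy, sub_dotProduct, smul_dotProduct, hv, hqp, smul_eq_mul, mul_zero, sub_zero]
    have hy2 : y ⬝ᵥ A.mulVec zm = 0 := by
      rw [hy, sub_dotProduct, smul_dotProduct, smul_eq_mul, hs, ← hcc]
      field_simp
      ring
    -- key orthogonality: ∀ u with u ⬝ᵥ A zp = 0, u ⬝ᵥ A y = 0
    have horth : ∀ u : Fin n → ℝ, u ⬝ᵥ A.mulVec zp = 0 → u ⬝ᵥ A.mulVec y = 0 := by
      intro u hu
      set su := (u ⬝ᵥ A.mulVec zm)/c with hsu
      set yu := u - su • zp with hyu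
      have hu1 : yu ⬝ᵥ A.mulVec zp = 0 := by
        rw [hyu, sub_dotProduct, smul_dotProduct, hu, hqp, smul_eq_mul, mul_zero, sub_zero]
      have hu2 : yu ⬝ᵥ A.mulVec zm = 0 := by
        rw [hyu, sub_dotProduct, smul_dotProduct, smul_eq_mul, hsu, ← hcc]
        field_simp
        ring
      have e1 : yu ⬝ᵥ A.mulVec y = 0 := hbil yu y hu1 hu2 hy1 hy2
      have e2 : zp ⬝ᵥ A.mulVec y = 0 := by rw [dotsymm A hA zp y]; exact hy1
      have : u ⬝ᵥ A.mulVec y = yu ⬝ᵥ A.mulVec y + su * (zp ⬝ᵥ A.mulVec y) := by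
        rw [hyu, sub_dotProduct, smul_dotProduct, smul_eq_mul]; ring
      rw [this, e1, e2, mul_zero, add_zero]
    -- now Euclidean space argument
    set ι := (WithLp.equiv 2 (Fin n → ℝ)).symm with hι
    have hmem : ι (A.mulVec y) ∈ ((ℝ ∙ (ι (A.mulVec zp)))ᗮ)ᗮ := by
      rw [Submodule.mem_orthogonal]
      intro u hu
      rw [Submodule.mem_orthogonal_singleton_iff_inner_right] at hu
      have hu2 : (A.mulVec zp) ⬝ᵥ (WithLp.equiv 2 (Fin n → ℝ) u) = 0 := by
        rw [← hu, hι, EuclideanSpace.inner_eq_star_dotProduct]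
        simp
        exact dotProduct_comm _ _
      have hu' : (WithLp.equiv 2 (Fin n → ℝ) u) ⬝ᵥ A.mulVec zp = 0 := by
        rw [dotProduct_comm]; exact hu2
      have h7 := horth _ hu'
      have : (inner ℝ u (ι (A.mulVec y)) : ℝ)
          = (WithLp.equiv 2 (Fin n → ℝ) u) ⬝ᵥ A.mulVec y := by
        rw [hι, EuclideanSpace.inner_eq_star_dotProduct]
        simp
        exact dotProduct_comm _ _
      rw [this]
      exact h7
    rw [Submodule.orthogonal_orthogonal, Submodule.mem_span_singleton] at hmem
    obtain ⟨κ, hκ⟩ := hmem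
    refine ⟨κ + s, ?_⟩
    have hAy : A.mulVec y = κ • A.mulVec zp := by
      have := congrArg (WithLp.equiv 2 (Fin n → ℝ)) hκ
      simpa [hι] using this.symm
    have hx : v = y + s • zp := by rw [hy]; module
    have h6 : A.mulVec v = A.mulVec y + s • A.mulVec zp := by
      conv_lhs => rw [hx]
      rw [mulVec_add, mulVec_smul]
    rw [h6, hAy, ← add_smul]
  -- rank bound
  have hrange : LinearMap.range A.mulVecLin ≤
      Submodule.span ℝ ({A.mulVec zp, A.mulVec zm} : Set (Fin n → ℝ)) := by
    rintro w ⟨x, rfl⟩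
    set t := (x ⬝ᵥ A.mulVec zp)/c with ht
    set v := x - t • zm with hv
    have hv1 : v ⬝ᵥ A.mulVec zp = 0 := by
      rw [hv, sub_dotProduct, smul_dotProduct, smul_eq_mul, ht]
      rw [dotsymm A hA zm zp, ← hcc]
      field_simp
      ring
    obtain ⟨κ, hκ⟩ := claim v hv1
    have : A.mulVecLin x = κ • A.mulVec zp + t • A.mulVec zm := by
      have hx : x = v + t • zm := by rw [hv]; abel
      rw [mulVecLin_apply, hx, mulVec_add, mulVec_smul, hκ]
    rw [this]
    exact Submodule.add_mem _
      (Submodule.smul_mem _ _ (Submodule.subset_span (Set.mem_insert _ _)))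
      (Submodule.smul_mem _ _ (Submodule.subset_span (Set.mem_insert_of_mem _ rfl)))
  have hfr : Module.finrank ℝ (Submodule.span ℝ ({A.mulVec zp, A.mulVec zm} : Set (Fin n → ℝ))) ≤ 2 := by
    refine (finrank_span_le_card _).trans ?_
    simp [Set.toFinset_insert]
    exact Finset.card_insert_le _ _ |>.trans (by simp)
  calc A.rank = Module.finrank ℝ (LinearMap.range A.mulVecLin) := rfl
    _ ≤ _ := Submodule.finrank_mono hrange
    _ ≤ 2 := hfr


lemma dot_mulVec_triple (A : Matrix (Fin n) (Fin n) ℝ) (x p q r : Fin n → ℝ) (a b c : ℝ) :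
    x ⬝ᵥ A.mulVec (a • p + (b • q + c • r))
      = a*(x ⬝ᵥ A.mulVec p) + b*(x ⬝ᵥ A.mulVec q) + c*(x ⬝ᵥ A.mulVec r) := by
  simp only [mulVec_add, mulVec_smul, dotProduct_add, dotProduct_smul, smul_eq_mul]
  ring

lemma Qtriple (A : Matrix (Fin n) (Fin n) ℝ) (hA : A.IsSymm) (p q r : Fin n → ℝ) (a b c : ℝ) :
    (a • p + (b • q + c • r)) ⬝ᵥ A.mulVec (a • p + (b • q + c • r))
      = a^2*(p ⬝ᵥ A.mulVec p) + b^2*(q ⬝ᵥ A.mulVec q) + c^2*(r ⬝ᵥ A.mulVec r)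
        + 2*a*b*(p ⬝ᵥ A.mulVec q) + 2*a*c*(p ⬝ᵥ A.mulVec r) + 2*b*c*(q ⬝ᵥ A.mulVec r) := by
  simp only [mulVec_add, mulVec_smul, dotProduct_add, dotProduct_smul, add_dotProduct,
    smul_dotProduct, smul_eq_mul]
  rw [dotsymm A hA q p, dotsymm A hA r p, dotsymm A hA r q]
  ring

lemma circle_IVT (A B : Matrix (Fin n) (Fin n) ℝ) (hA : A.IsSymm) (hB : B.IsSymm)
    (zp zm y : Fin n → ℝ)
    (hqp : zp ⬝ᵥ A.mulVec zp = 0) (hqm : zm ⬝ᵥ A.mulVec zm = 0)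
    (hBp : 0 < zp ⬝ᵥ B.mulVec zp) (hBm : zm ⬝ᵥ B.mulVec zm < 0)
    (hy1 : zp ⬝ᵥ A.mulVec y = 0) (hy2 : zm ⬝ᵥ A.mulVec y = 0)
    (hα : y ⬝ᵥ A.mulVec y ≠ 0) (hc : zp ⬝ᵥ A.mulVec zm ≠ 0)
    (ε : ℝ) (hε : ε^2 = 1)
    (hk : 0 ≤ (-2) * (zp ⬝ᵥ A.mulVec zm) * ε / (y ⬝ᵥ A.mulVec y)) :
    ∃ z₁ : Fin n → ℝ, z₁ ⬝ᵥ A.mulVec z₁ = 0 ∧ z₁ ⬝ᵥ B.mulVec z₁ = 0 ∧ A.mulVec z₁ ≠ 0 := by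
  set c := zp ⬝ᵥ A.mulVec zm with hcc
  set α := y ⬝ᵥ A.mulVec y with hαα
  set k := (-2) * c * ε / α with hkk
  set ρ := fun θ : ℝ => Real.sqrt (k * (Real.cos θ * Real.sin θ)) with hρ
  set γ := fun θ : ℝ => (ε * Real.cos θ) • zp + ((Real.sin θ) • zm + (ρ θ) • y) with hγ
  -- on [0, π/2], ρ² = k cos sin
  have hρsq : ∀ θ ∈ Set.Icc (0:ℝ) (Real.pi/2), (ρ θ)^2 = k * (Real.cos θ * Real.sin θ) := by
    intro θ hθ
    apply Real.sq_sqrt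
    have hcos : 0 ≤ Real.cos θ := Real.cos_nonneg_of_mem_Icc
      ⟨by linarith [hθ.1, Real.pi_pos], hθ.2⟩
    have hsin : 0 ≤ Real.sin θ := Real.sin_nonneg_of_nonneg_of_le_pi hθ.1
      (by linarith [hθ.2, Real.pi_pos])
    positivity
  -- scalar formula for Q_B on the curve
  set F := fun θ : ℝ => (ε * Real.cos θ)^2 * (zp ⬝ᵥ B.mulVec zp)
      + (Real.sin θ)^2 * (zm ⬝ᵥ B.mulVec zm) + (ρ θ)^2 * (y ⬝ᵥ B.mulVec y)
      + 2*(ε * Real.cos θ)*(Real.sin θ)*(zp ⬝ᵥ B.mulVec zm)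
      + 2*(ε * Real.cos θ)*(ρ θ)*(zp ⬝ᵥ B.mulVec y)
      + 2*(Real.sin θ)*(ρ θ)*(zm ⬝ᵥ B.mulVec y) with hF
  have hQBγ : ∀ θ, (γ θ) ⬝ᵥ B.mulVec (γ θ) = F θ := by
    intro θ
    rw [hγ, hF]
    exact Qtriple B hB zp zm y _ _ _
  have hQAγ : ∀ θ ∈ Set.Icc (0:ℝ) (Real.pi/2), (γ θ) ⬝ᵥ A.mulVec (γ θ) = 0 := by
    intro θ hθ
    rw [hγ]
    rw [Qtriple A hA zp zm y _ _ _]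
    rw [hqp, hqm, hy1, hy2, ← hcc, ← hαα, hρsq θ hθ, hkk]
    field_simp
    ring
  -- continuity of F
  have hFc : Continuous F := by
    rw [hF]
    have hρc : Continuous ρ := by
      rw [hρ]
      exact Real.continuous_sqrt.comp (by fun_prop)
    fun_prop
  -- endpoint values
  have hF0 : F 0 = zp ⬝ᵥ B.mulVec zp := by
    rw [hF]
    simp [hρ]
    ring_nf
    simp [hε]
  have hFpi : F (Real.pi/2) = zm ⬝ᵥ B.mulVec zm := by
    rw [hF]
    simp [hρ]
  have hsub := intermediate_value_Icc' (by positivity : (0:ℝ) ≤ Real.pi/2) hFc.continuousOn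
  have hmem : (0:ℝ) ∈ Set.Icc (F (Real.pi/2)) (F 0) := by
    rw [hFpi, hF0]
    exact ⟨hBm.le, hBp.le⟩
  obtain ⟨θs, hθs, hFθ⟩ := hsub hmem
  refine ⟨γ θs, hQAγ θs hθs, by rw [hQBγ, hFθ], ?_⟩
  intro hzero
  have hε0 : ε ≠ 0 := by intro h; rw [h] at hε; norm_num at hε
  have hd1 : zp ⬝ᵥ A.mulVec (γ θs) = Real.sin θs * c := by
    rw [hγ, dot_mulVec_triple, hqp, hy1, ← hcc]
    ring
  have hd2 : zm ⬝ᵥ A.mulVec (γ θs) = (ε * Real.cos θs) * c := by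
    rw [hγ, dot_mulVec_triple, hqm, hy2, dotsymm A hA zm zp, ← hcc]
    ring
  rw [hzero, dotProduct_zero] at hd1 hd2
  have hsin : Real.sin θs = 0 := by
    rcases mul_eq_zero.1 hd1.symm with h | h
    · exact h
    · exact absurd h hc
  have hcos : Real.cos θs = 0 := by
    rcases mul_eq_zero.1 hd2.symm with h | h
    · rcases mul_eq_zero.1 h with h' | h'
      · exact absurd h' hε0
      · exact h'
    · exact absurd h hc
  have := Real.sin_sq_add_cos_sq θs
  rw [hsin, hcos] at this
  norm_num at this


lemma li_swap {M : Type*} [AddCommGroup M] [Module ℝ M] {x y : M}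
    (h : LinearIndependent ℝ ![x, y]) :
    LinearIndependent ℝ ![y, x] := by
  rw [LinearIndependent.pair_iff] at h ⊢
  intro s t hst
  have := h t s (by rw [← hst]; abel)
  exact ⟨this.2, this.1⟩

lemma smul_cancel {x : Fin n → ℝ} {t : ℝ} (ht : t ≠ 0) (h : t • x = 0) : x = 0 := by
  have := congrArg (fun w => t⁻¹ • w) h
  simpa [smul_smul, inv_mul_cancel₀ ht] using this

/-- From a common zero z₁ with A z₁ ≠ 0, conclude. -/
lemma from_z1 (A B : Matrix (Fin n) (Fin n) ℝ) (hA : A.IsSymm) (hB : B.IsSymm)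
    (hnd : ∀ F ∈ Submodule.span ℝ ({A, B} : Set (Matrix (Fin n) (Fin n) ℝ)),
      F.PosSemidef → F = 0)
    (hli : LinearIndependent ℝ ![A, B]) (z₁ : Fin n → ℝ)
    (h1 : z₁ ⬝ᵥ A.mulVec z₁ = 0) (h2 : z₁ ⬝ᵥ B.mulVec z₁ = 0) (h3 : A.mulVec z₁ ≠ 0) :
    ∃ z : Fin n → ℝ, z ⬝ᵥ A.mulVec z = 0 ∧ z ⬝ᵥ B.mulVec z = 0 ∧
      LinearIndependent ℝ ![A.mulVec z, B.mulVec z] := by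
  by_cases hli2 : LinearIndependent ℝ ![A.mulVec z₁, B.mulVec z₁]
  · exact ⟨z₁, h1, h2, hli2⟩
  rw [LinearIndependent.pair_iff] at hli2
  push_neg at hli2
  obtain ⟨s, t, hst, hne⟩ := hli2
  by_cases hs : s = 0
  · have ht : t ≠ 0 := hne hs
    have hBz : B.mulVec z₁ = 0 := by
      rw [hs, zero_smul, zero_add] at hst
      exact smul_cancel ht hst
    exact endgame A B hA hB hnd hli z₁ hBz h3 h1
  · have hdet : (0:ℝ)*t - 1*s ≠ 0 := by simpa using hs
    have he : (0:ℝ) • A + (1:ℝ) • B = B := by module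
    have hspan := span_pair_comb A B 0 1 s t hdet
    rw [he] at hspan
    have hnd' : ∀ F ∈ Submodule.span ℝ ({B, s•A + t•B} : Set (Matrix (Fin n) (Fin n) ℝ)),
        F.PosSemidef → F = 0 := by
      intro F hF hp
      rw [hspan] at hF
      exact hnd F hF hp
    have hli' : LinearIndependent ℝ ![B, s•A + t•B] := by
      have := li_comb hli 0 1 s t hdet
      rwa [he] at this
    have hCz : (s•A + t•B).mulVec z₁ = 0 := by rw [mulVec_comb]; exact hst
    have hBz1 : B.mulVec z₁ ≠ 0 := by
      intro h
      rw [h, smul_zero, add_zero] at hst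
      exact h3 (smul_cancel hs hst)
    obtain ⟨z, hz1, hz2, hz3⟩ := endgame B (s•A + t•B) hB (symm_comb hA hB s t) hnd' hli' z₁
      hCz hBz1 h2
    have := transversal_comb A B 0 1 s t hdet z (by rw [he]; exact hz1) hz2
      (by rw [he]; exact hz3)
    exact ⟨z, this.1, this.2.1, this.2.2⟩

lemma aux_rank3 (A B : Matrix (Fin n) (Fin n) ℝ) (hA : A.IsSymm) (hB : B.IsSymm)
    (hnd : ∀ F ∈ Submodule.span ℝ ({A, B} : Set (Matrix (Fin n) (Fin n) ℝ)),
      F.PosSemidef → F = 0)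
    (hli : LinearIndependent ℝ ![A, B]) (hrank : 3 ≤ A.rank) :
    ∃ z : Fin n → ℝ, z ⬝ᵥ A.mulVec z = 0 ∧ z ⬝ᵥ B.mulVec z = 0 ∧
      LinearIndependent ℝ ![A.mulVec z, B.mulVec z] := by
  have hAmem : A ∈ Submodule.span ℝ ({A, B} : Set (Matrix (Fin n) (Fin n) ℝ)) :=
    Submodule.subset_span (Set.mem_insert _ _)
  have hA0 : A ≠ 0 := by
    intro h
    have := hli.eq_zero_of_pair (s := (1:ℝ)) (t := (0:ℝ)) (by rw [h]; simp)
    simpa using this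
  obtain ⟨u₀, hu₀⟩ := member_pos A B A hA hnd hAmem hA0
  have hnegsymm : (-A).IsSymm := by simp [Matrix.IsSymm, hA.eq]
  obtain ⟨v₀, hv₀'⟩ := member_pos A B (-A) hnegsymm hnd (Submodule.neg_mem _ hAmem)
    (by simpa [neg_eq_zero] using hA0)
  have hv₀ : v₀ ⬝ᵥ A.mulVec v₀ < 0 := by
    have := hv₀'
    simp only [neg_mulVec, dotProduct_neg] at this
    linarith
  -- z⁻
  obtain ⟨zm, hqm, hbm⟩ := exists_neg_on_null A B hA hB hnd hli u₀ v₀ hu₀ hv₀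
  -- z⁺ via -B
  have hdet1 : (1:ℝ)*(-1) - 0*0 ≠ 0 := by norm_num
  have he1 : (1:ℝ) • A + (0:ℝ) • B = A := by module
  have he2 : (0:ℝ) • A + (-1:ℝ) • B = -B := by module
  have hspan1 := span_pair_comb A B 1 0 0 (-1) hdet1
  rw [he1, he2] at hspan1
  have hnd1 : ∀ F ∈ Submodule.span ℝ ({A, -B} : Set (Matrix (Fin n) (Fin n) ℝ)),
      F.PosSemidef → F = 0 := by
    intro F hF hp
    rw [hspan1] at hF
    exact hnd F hF hp
  have hli1 : LinearIndependent ℝ ![A, -B] := by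
    have := li_comb hli 1 0 0 (-1) hdet1
    rwa [he1, he2] at this
  have hnBsymm : (-B).IsSymm := by simp [Matrix.IsSymm, hB.eq]
  obtain ⟨zp, hqp, hbp'⟩ := exists_neg_on_null A (-B) hA hnBsymm hnd1 hli1 u₀ v₀ hu₀ hv₀
  have hbp : 0 < zp ⬝ᵥ B.mulVec zp := by
    have := hbp'
    simp only [neg_mulVec, dotProduct_neg] at this
    linarith
  set c := zp ⬝ᵥ A.mulVec zm with hcc
  by_cases hc : c = 0
  · -- plane roots case
    set bp := zp ⬝ᵥ B.mulVec zp with hbpd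
    set bm := zm ⬝ᵥ B.mulVec zm with hbmd
    set bb := zp ⬝ᵥ B.mulVec zm with hbbd
    have hdisc : 0 < bb^2 - bp*bm := by nlinarith
    have hr2 : Real.sqrt (bb^2 - bp*bm) ^ 2 = bb^2 - bp*bm := Real.sq_sqrt hdisc.le
    have hrpos : 0 < Real.sqrt (bb^2 - bp*bm) := Real.sqrt_pos.2 hdisc
    set r := Real.sqrt (bb^2 - bp*bm) with hrd
    set T₀ := -bb + r with hT0
    set T₁ := -bb - r with hT1
    set W₀ := bp • zm + T₀ • zp with hW0
    set W₁ := bp • zm + T₁ • zp with hW1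
    have hQAW : ∀ T : ℝ, (bp • zm + T • zp) ⬝ᵥ A.mulVec (bp • zm + T • zp) = 0 := by
      intro T
      rw [Qline2 A hA zm zp bp T, hqm, hqp, ← hcc, hc]
      ring
    have hQBW0 : W₀ ⬝ᵥ B.mulVec W₀ = 0 := by
      rw [hW0, Qline2 B hB zm zp bp T₀, ← hbmd, ← hbpd]
      rw [show zp ⬝ᵥ B.mulVec zm = bb from rfl]
      rw [hT0]
      linear_combination bp * hr2
    have hQBW1 : W₁ ⬝ᵥ B.mulVec W₁ = 0 := by
      rw [hW1, Qline2 B hB zm zp bp T₁, ← hbmd, ← hbpd]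
      rw [show zp ⬝ᵥ B.mulVec zm = bb from rfl]
      rw [hT1]
      linear_combination bp * hr2
    by_cases hAW0 : A.mulVec W₀ ≠ 0
    · exact from_z1 A B hA hB hnd hli W₀ (by rw [hW0]; exact hQAW T₀) hQBW0 hAW0
    by_cases hAW1 : A.mulVec W₁ ≠ 0
    · exact from_z1 A B hA hB hnd hli W₁ (by rw [hW1]; exact hQAW T₁) hQBW1 hAW1
    push_neg at hAW0 hAW1
    have hAzp : A.mulVec zp = 0 := by
      have hsub : A.mulVec W₀ - A.mulVec W₁ = (T₀ - T₁) • A.mulVec zp := by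
        rw [hW0, hW1]
        rw [mulVec_add, mulVec_add, mulVec_smul, mulVec_smul, mulVec_smul]
        module
      rw [hAW0, hAW1, sub_zero] at hsub
      have hTne : T₀ - T₁ ≠ 0 := by rw [hT0, hT1]; intro h; nlinarith [hrpos]
      exact (smul_cancel hTne hsub.symm)
    have hBzp : B.mulVec zp ≠ 0 := by
      intro h
      have : bp = 0 := by rw [hbpd, h, dotProduct_zero]
      linarith
    -- both A W₀ = A W₁ = 0 ; at least one of B W₀, B W₁ nonzero
    have hpick : B.mulVec W₀ ≠ 0 ∨ B.mulVec W₁ ≠ 0 := by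
      by_contra h
      push_neg at h
      apply hBzp
      have hsub : B.mulVec W₀ - B.mulVec W₁ = (T₀ - T₁) • B.mulVec zp := by
        rw [hW0, hW1]
        rw [mulVec_add, mulVec_add, mulVec_smul, mulVec_smul, mulVec_smul]
        module
      rw [h.1, h.2, sub_zero] at hsub
      have hTne : T₀ - T₁ ≠ 0 := by rw [hT0, hT1]; intro hx; nlinarith [hrpos]
      exact smul_cancel hTne hsub.symm
    -- swapped endgame
    have hspan2 : Submodule.span ℝ ({B, A} : Set (Matrix (Fin n) (Fin n) ℝ))
        = Submodule.span ℝ ({A, B} : Set (Matrix (Fin n) (Fin n) ℝ)) := by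
      rw [Set.pair_comm]
    have hnd2 : ∀ F ∈ Submodule.span ℝ ({B, A} : Set (Matrix (Fin n) (Fin n) ℝ)),
        F.PosSemidef → F = 0 := by
      intro F hF hp
      rw [hspan2] at hF
      exact hnd F hF hp
    have hli2 : LinearIndependent ℝ ![B, A] := li_swap hli
    rcases hpick with hw | hw
    · obtain ⟨z, hz1, hz2, hz3⟩ := endgame B A hB hA hnd2 hli2 W₀ (hAW0) hw hQBW0
      exact ⟨z, hz2, hz1, li_swap hz3⟩
    · obtain ⟨z, hz1, hz2, hz3⟩ := endgame B A hB hA hnd2 hli2 W₁ (hAW1) hw hQBW1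
      exact ⟨z, hz2, hz1, li_swap hz3⟩
  · -- c ≠ 0
    by_cases hY : ∃ y : Fin n → ℝ, y ⬝ᵥ A.mulVec zp = 0 ∧ y ⬝ᵥ A.mulVec zm = 0 ∧
        y ⬝ᵥ A.mulVec y ≠ 0
    · obtain ⟨y, hy1, hy2, hy3⟩ := hY
      have hy1' : zp ⬝ᵥ A.mulVec y = 0 := by rw [dotsymm A hA zp y]; exact hy1
      have hy2' : zm ⬝ᵥ A.mulVec y = 0 := by rw [dotsymm A hA zm y]; exact hy2
      set α := y ⬝ᵥ A.mulVec y with hαd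
      have hz1ex : ∃ z₁ : Fin n → ℝ, z₁ ⬝ᵥ A.mulVec z₁ = 0 ∧ z₁ ⬝ᵥ B.mulVec z₁ = 0 ∧
          A.mulVec z₁ ≠ 0 := by
        by_cases hsgn : 0 ≤ (-2) * c / α
        · exact circle_IVT A B hA hB zp zm y hqp hqm hbp hbm hy1' hy2' hy3 hc 1
            (by norm_num) (by rw [← hcc, ← hαd]; simpa using hsgn)
        · refine circle_IVT A B hA hB zp zm y hqp hqm hbp hbm hy1' hy2' hy3 hc (-1)
            (by norm_num) ?_
          rw [← hcc, ← hαd]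
          have he : (-2) * c * (-1) / α = -((-2) * c / α) := by ring
          rw [he]
          linarith [not_le.1 hsgn]
      obtain ⟨z₁, hz11, hz12, hz13⟩ := hz1ex
      exact from_z1 A B hA hB hnd hli z₁ hz11 hz12 hz13
    · push_neg at hY
      exfalso
      have hrle := rank_contra A hA zp zm hqp hqm (by rw [← hcc]; exact hc) ?_
      · omega
      · intro y h1 h2
        exact hY y h1 h2



end helpers


theorem nondissipative_pair_transversal_point {n : ℕ}
    (A B : Matrix (Fin n) (Fin n) ℝ) (hA : A.IsSymm) (hB : B.IsSymm)
    (hnd : ∀ F ∈ Submodule.span ℝ ({A, B} : Set (Matrix (Fin n) (Fin n) ℝ)),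
      F.PosSemidef → F = 0)
    (hrank : ∃ F ∈ Submodule.span ℝ ({A, B} : Set (Matrix (Fin n) (Fin n) ℝ)), 3 ≤ F.rank)
    (hli : LinearIndependent ℝ ![A, B]) :
    ∃ z : Fin n → ℝ, z ⬝ᵥ A.mulVec z = 0 ∧ z ⬝ᵥ B.mulVec z = 0 ∧
      LinearIndependent ℝ ![A.mulVec z, B.mulVec z] := by
  obtain ⟨F, hFmem, hFrank⟩ := hrank
  obtain ⟨a, b, hab⟩ := Submodule.mem_span_pair.1 hFmem
  by_cases ha : a = 0
  · by_cases hb : b = 0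
    · exfalso
      have hF0 : F = 0 := by rw [← hab, ha, hb]; simp
      rw [hF0] at hFrank
      rw [Matrix.rank_zero] at hFrank
      omega
    · have hdet : (0:ℝ)*0 - b*1 ≠ 0 := by simpa using hb
      have he : (1:ℝ) • A + (0:ℝ) • B = A := by module
      have hspan := span_pair_comb A B 0 b 1 0 hdet
      rw [he] at hspan
      have hnd' : ∀ G ∈ Submodule.span ℝ
          ({(0:ℝ) • A + b • B, A} : Set (Matrix (Fin n) (Fin n) ℝ)), G.PosSemidef → G = 0 := by
        intro G hG hp
        rw [hspan] at hG
        exact hnd G hG hp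
      have hli' : LinearIndependent ℝ ![(0:ℝ) • A + b • B, A] := by
        have := li_comb hli 0 b 1 0 hdet
        rwa [he] at this
      have habF : (0:ℝ) • A + b • B = F := by rw [← hab, ha]
      have hrankF : 3 ≤ ((0:ℝ) • A + b • B).rank := by rw [habF]; exact hFrank
      obtain ⟨z, h1, h2, h3⟩ := aux_rank3 ((0:ℝ) • A + b • B) A
        (symm_comb hA hB 0 b) hA hnd' hli' hrankF
      have := transversal_comb A B 0 b 1 0 hdet z h1 (by rw [he]; exact h2)
        (by rw [he]; exact h3)
      exact ⟨z, this.1, this.2.1, this.2.2⟩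
  · have hdet : a*1 - b*0 ≠ 0 := by simpa using ha
    have he : (0:ℝ) • A + (1:ℝ) • B = B := by module
    have hspan := span_pair_comb A B a b 0 1 hdet
    rw [he] at hspan
    have hnd' : ∀ G ∈ Submodule.span ℝ
        ({a • A + b • B, B} : Set (Matrix (Fin n) (Fin n) ℝ)), G.PosSemidef → G = 0 := by
      intro G hG hp
      rw [hspan] at hG
      exact hnd G hG hp
    have hli' : LinearIndependent ℝ ![a • A + b • B, B] := by
      have := li_comb hli a b 0 1 hdet
      rwa [he] at this
    have hrankF : 3 ≤ (a • A + b • B).rank := by rw [hab]; exact hFrank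
    obtain ⟨z, h1, h2, h3⟩ := aux_rank3 (a • A + b • B) B
      (symm_comb hA hB a b) hB hnd' hli' hrankF
    have := transversal_comb A B a b 0 1 hdet z h1 (by rw [he]; exact h2)
      (by rw [he]; exact h3)
    exact ⟨z, this.1, this.2.1, this.2.2⟩
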